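/- Let $K \in H^1([0,1]; \mathbb{R}^{d\times d})$ and for each $n$ define $K_i^{(n)} = n\int_{i/n}^{(i+1)/n} K(t)\,dt$, $i = 0, \dots, n-1$. Then for every $\varepsilon > 0$, $\limsup_{n\to\infty}\left(n\sum_{i=1}^{n-1}\|K_i^{(n)} - K_{i-1}^{(n)}\|^2 + \tau_1\|K_0^{(n)}\|^2\right) \leq (1+\varepsilon)\left(\int_0^1\|\nabla K(t)\|^2 dt + \tau_1\|K(0)\|^2\right)$; consequently $\limsup_{n\to\infty} R_n^{(1)}(K^{(n)}) \leq R_\infty^{(1)}(K)$, where $R_n^{(1)}(K^{(n)}) = n\sum_{i=1}^{n-1}\|K_i^{(n)} - K_{i-1}^{(n)}\|^2 + \tau_1\|K_0^{(n)}\|^2$ and $R_\infty^{(1)}(K) = \|\nabla K\|_{L^2}^2 + \tau_1\|K(0)\|^2$, with $\tau_1 > 0$. -/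

import Mathlib

open Set Filter MeasureTheory intervalIntegral Topology

/-- The local average `K_i^{(n)} = n ∫_{i/n}^{(i+1)/n} K`. -/
noncomputable def localAvg {d : ℕ} (K : ℝ → EuclideanSpace ℝ (Fin d × Fin d)) (n i : ℕ) :
    EuclideanSpace ℝ (Fin d × Fin d) :=
  (n : ℝ) • ∫ t in ((i : ℝ) / n)..(((i : ℝ) + 1) / n), K t

/-- The limsup (recovery sequence) inequality for the non-parametric ResNet
regulariser: for `K ∈ H¹([0,1])` with weak derivative `K'`,
`limsup_n R_n^{(1)}(K^{(n)}) ≤ R_∞^{(1)}(K)` where `K^{(n)}` are the local averages. -/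
lemma sq_integral_le (g : ℝ → ℝ) (a b : ℝ) (hab : a ≤ b)
    (hg : IntervalIntegrable g volume a b)
    (hg2 : IntervalIntegrable (fun x => g x ^ 2) volume a b) :
    (∫ x in a..b, g x) ^ 2 ≤ (b - a) * ∫ x in a..b, g x ^ 2 := by
  rcases eq_or_lt_of_le hab with rfl | hlt
  · simp
  set I1 := ∫ x in a..b, g x with hI1
  set I2 := ∫ x in a..b, g x ^ 2 with hI2
  set c : ℝ := I1 / (b - a) with hc
  have h0 : 0 ≤ ∫ x in a..b, (g x - c) ^ 2 :=
    intervalIntegral.integral_nonneg hab (fun x _ => sq_nonneg _)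
  have hexp : (∫ x in a..b, (g x - c) ^ 2)
      = I2 - 2 * c * I1 + (b - a) * c ^ 2 := by
    have : ∀ x, (g x - c) ^ 2 = g x ^ 2 - (2 * c) * g x + c ^ 2 := by intro x; ring
    simp_rw [this]
    rw [intervalIntegral.integral_add ((hg2.sub (hg.const_mul (2*c)))) intervalIntegrable_const,
      intervalIntegral.integral_sub hg2 (hg.const_mul (2*c)),
      intervalIntegral.integral_const_mul, intervalIntegral.integral_const]
    simp [hI1, hI2]
  have hcb : c * (b - a) = I1 := by
    rw [hc, div_mul_cancel₀ _ (sub_ne_zero.mpr hlt.ne')]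
  rw [hexp] at h0
  nlinarith [h0, hcb, sq_nonneg (b - a), hlt]

lemma norm_integral_sq_le {E : Type*} [NormedAddCommGroup E] [NormedSpace ℝ E]
    (f : ℝ → E) (a b : ℝ) (hab : a ≤ b)
    (hf : IntervalIntegrable f volume a b)
    (hf2 : IntervalIntegrable (fun x => ‖f x‖ ^ 2) volume a b) :
    ‖∫ x in a..b, f x‖ ^ 2 ≤ (b - a) * ∫ x in a..b, ‖f x‖ ^ 2 := by
  have h1 : ‖∫ x in a..b, f x‖ ≤ ∫ x in a..b, ‖f x‖ :=
    intervalIntegral.norm_integral_le_integral_norm hab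
  have h2 : (∫ x in a..b, ‖f x‖) ^ 2 ≤ (b - a) * ∫ x in a..b, ‖f x‖ ^ 2 :=
    sq_integral_le _ a b hab hf.norm hf2
  calc ‖∫ x in a..b, f x‖ ^ 2 ≤ (∫ x in a..b, ‖f x‖) ^ 2 :=
        pow_le_pow_left₀ (norm_nonneg _) h1 2
    _ ≤ _ := h2

/-- The per-`n` key estimate. -/
lemma key_estimate {d : ℕ}
    (K K' : ℝ → EuclideanSpace ℝ (Fin d × Fin d))
    (hK'int : IntervalIntegrable K' MeasureTheory.volume 0 1)
    (hK'L2 : IntervalIntegrable (fun t => ‖K' t‖ ^ 2) MeasureTheory.volume 0 1)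
    (hFTC : ∀ s ∈ Icc (0:ℝ) 1, ∀ t ∈ Icc (0:ℝ) 1, K t - K s = ∫ u in s..t, K' u)
    (hKcont : ContinuousOn K (Icc 0 1))
    (n : ℕ) (hn : 1 ≤ n) :
    (n : ℝ) * ∑ i ∈ Finset.Icc 1 (n - 1), ‖localAvg K n i - localAvg K n (i - 1)‖ ^ 2
      ≤ ∫ t in (0:ℝ)..1, ‖K' t‖ ^ 2 := by
  have hn0 : (0:ℝ) < n := by exact_mod_cast hn
  set h : ℝ := (n:ℝ)⁻¹ with hh
  have hh0 : 0 < h := inv_pos.mpr hn0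
  have hnh : (n:ℝ) * h = 1 := mul_inv_cancel₀ hn0.ne'
  have hh1 : h ≤ 1 := by
    rw [hh]
    apply inv_le_one_of_one_le₀
    exact_mod_cast hn
  set m : ℝ := 1 - h with hm
  have hm0 : 0 ≤ m := by linarith
  have hmh : m + h = 1 := by ring
  set D : ℝ → EuclideanSpace ℝ (Fin d × Fin d) := fun s => K (s + h) - K s with hD
  set ψ : ℝ → ℝ := fun s => ‖D s‖ ^ 2 with hψ
  -- continuity of D on [0, m]
  have hshift : ContinuousOn (fun s : ℝ => K (s + h)) (Icc 0 m) := by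
    apply hKcont.comp (Continuous.continuousOn (continuous_add_right h))
    intro s hs
    simp only [mem_Icc] at hs ⊢
    constructor <;> linarith [hh0.le]
  have hDcont : ContinuousOn D (Icc 0 m) := by
    apply hshift.sub (hKcont.mono ?_)
    exact Icc_subset_Icc le_rfl (by linarith)
  have hψcont : ContinuousOn ψ (Icc 0 m) := (hDcont.norm).pow 2
  -- Φ : primitive of ‖K'‖²
  set Φ : ℝ → ℝ := fun x => ∫ u in (0:ℝ)..x, ‖K' u‖ ^ 2 with hΦ
  have hΦcont : ContinuousOn Φ (Icc 0 1) := by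
    have := intervalIntegral.continuousOn_primitive_interval' hK'L2
      (left_mem_uIcc (a := (0:ℝ)) (b := 1))
    rwa [uIcc_of_le zero_le_one] at this
  have hL2sub : ∀ a b : ℝ, 0 ≤ a → b ≤ 1 → a ≤ b →
      IntervalIntegrable (fun t => ‖K' t‖ ^ 2) volume a b := by
    intro a b ha hb hab
    apply hK'L2.mono_set
    rw [uIcc_of_le hab, uIcc_of_le zero_le_one]
    exact Icc_subset_Icc ha hb
  -- pointwise bound ψ s ≤ h * (Φ (s+h) - Φ s)
  have hpt : ∀ s ∈ Icc (0:ℝ) m, ψ s ≤ h * (Φ (s + h) - Φ s) := by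
    intro s hs
    have hs1 : s ∈ Icc (0:ℝ) 1 := ⟨hs.1, by linarith [hs.2]⟩
    have hsh1 : s + h ∈ Icc (0:ℝ) 1 := ⟨by linarith [hs.1, hh0.le], by linarith [hs.2]⟩
    have hDs : D s = ∫ u in s..(s + h), K' u := hFTC s hs1 (s + h) hsh1
    have hK'sub : IntervalIntegrable K' volume s (s + h) := by
      apply hK'int.mono_set
      rw [uIcc_of_le (by linarith [hh0.le] : s ≤ s + h), uIcc_of_le zero_le_one]
      exact Icc_subset_Icc hs1.1 hsh1.2
    have hL2s : IntervalIntegrable (fun t => ‖K' t‖ ^ 2) volume s (s + h) :=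
      hL2sub s (s + h) hs1.1 hsh1.2 (by linarith [hh0.le])
    have hJ : ‖∫ u in s..(s + h), K' u‖ ^ 2 ≤ (s + h - s) * ∫ u in s..(s + h), ‖K' u‖ ^ 2 :=
      norm_integral_sq_le K' s (s + h) (by linarith [hh0.le]) hK'sub hL2s
    have hΦdiff : Φ (s + h) - Φ s = ∫ u in s..(s + h), ‖K' u‖ ^ 2 :=
      integral_interval_sub_left (hL2sub 0 (s + h) le_rfl hsh1.2 hsh1.1) (hL2sub 0 s le_rfl hs1.2 hs1.1)
    rw [hψ]
    simp only [hDs]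
    rw [hΦdiff]
    simpa using hJ
  -- per-term bound
  have hterm : ∀ i ∈ Finset.Icc 1 (n - 1),
      ‖localAvg K n i - localAvg K n (i - 1)‖ ^ 2
        ≤ (n : ℝ) * ∫ s in (((i:ℝ) - 1) / n)..((i:ℝ) / n), ψ s := by
    intro i hi
    obtain ⟨hi1, hi2⟩ := Finset.mem_Icc.mp hi
    have hi1' : (1:ℝ) ≤ i := by exact_mod_cast hi1
    have hin : i + 1 ≤ n := by omega
    have hin' : (i:ℝ) + 1 ≤ n := by exact_mod_cast hin
    set a : ℝ := ((i:ℝ) - 1) / n with ha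
    set b : ℝ := (i:ℝ) / n with hb
    set c : ℝ := ((i:ℝ) + 1) / n with hc
    have hab : a ≤ b := by rw [ha, hb]; gcongr; linarith
    have h0a : 0 ≤ a := div_nonneg (by linarith) hn0.le
    have hnm : ((n:ℝ) - 1) / n = m := by rw [hm, hh]; field_simp
    have hbm : b ≤ m := by
      rw [← hnm, hb]; gcongr; linarith
    have hab' : a + h = b := by rw [ha, hb, hh]; field_simp; ring
    have hbc' : b + h = c := by rw [hb, hc, hh]; field_simp
    have hIccab : Icc a b ⊆ Icc 0 m := Icc_subset_Icc h0a hbm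
    have hIccab1 : Icc a b ⊆ Icc 0 1 := Icc_subset_Icc h0a (by linarith [hh0.le])
    have hKs_int : IntervalIntegrable (fun s => K (s + h)) volume a b :=
      (hshift.mono hIccab).intervalIntegrable_of_Icc hab
    have hK_int : IntervalIntegrable K volume a b :=
      (hKcont.mono hIccab1).intervalIntegrable_of_Icc hab
    have hD_int : IntervalIntegrable D volume a b :=
      (hDcont.mono hIccab).intervalIntegrable_of_Icc hab
    have hψ_int : IntervalIntegrable ψ volume a b :=
      (hψcont.mono hIccab).intervalIntegrable_of_Icc hab
    have hLA_i : localAvg K n i = (n:ℝ) • ∫ t in b..c, K t := by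
      rw [hb, hc]; rfl
    have hLA_im : localAvg K n (i - 1) = (n:ℝ) • ∫ t in a..b, K t := by
      have h1 : ((i - 1 : ℕ) : ℝ) = (i:ℝ) - 1 := by
        push_cast [Nat.cast_sub hi1]; ring
      have h2 : ((i:ℝ) - 1 + 1) / (n:ℝ) = b := by rw [hb]; ring_nf
      show (n:ℝ) • ∫ t in (((i - 1 : ℕ) : ℝ) / n)..((((i - 1 : ℕ) : ℝ) + 1) / n), K t = _
      rw [h1, h2, ← ha]
    have hshift_eq : ∫ s in a..b, K (s + h) = ∫ t in b..c, K t := by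
      rw [intervalIntegral.integral_comp_add_right (fun t => K t) h, hab', hbc']
    have hdiff : localAvg K n i - localAvg K n (i - 1) = (n:ℝ) • ∫ s in a..b, D s := by
      rw [hLA_i, hLA_im, ← smul_sub, ← hshift_eq, ← intervalIntegral.integral_sub hKs_int hK_int]
    have hnorm : ‖localAvg K n i - localAvg K n (i - 1)‖ ^ 2
        = (n:ℝ) ^ 2 * ‖∫ s in a..b, D s‖ ^ 2 := by
      rw [hdiff, norm_smul, Real.norm_eq_abs, abs_of_nonneg hn0.le, mul_pow]
    have hJ : ‖∫ s in a..b, D s‖ ^ 2 ≤ (b - a) * ∫ s in a..b, ψ s :=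
      norm_integral_sq_le D a b hab hD_int hψ_int
    have hba : b - a = h := by linarith
    have hn2h : (n:ℝ) ^ 2 * h = n := by rw [hh, sq]; field_simp
    calc ‖localAvg K n i - localAvg K n (i - 1)‖ ^ 2
        = (n:ℝ) ^ 2 * ‖∫ s in a..b, D s‖ ^ 2 := hnorm
      _ ≤ (n:ℝ) ^ 2 * ((b - a) * ∫ s in a..b, ψ s) :=
          mul_le_mul_of_nonneg_left hJ (by positivity)
      _ = ((n:ℝ) ^ 2 * h) * ∫ s in a..b, ψ s := by rw [hba]; ring
      _ = (n : ℝ) * ∫ s in a..b, ψ s := by rw [hn2h]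
  -- sum of the adjacent integrals
  have hψint_sub : ∀ p q : ℝ, 0 ≤ p → q ≤ m → p ≤ q → IntervalIntegrable ψ volume p q := by
    intro p q hp hq hpq
    exact (hψcont.mono (Icc_subset_Icc hp hq)).intervalIntegrable_of_Icc hpq
  have hsum_eq : ∑ i ∈ Finset.Icc 1 (n - 1), ∫ s in (((i:ℝ) - 1) / n)..((i:ℝ) / n), ψ s
      = ∫ s in (0:ℝ)..m, ψ s := by
    have hIccIco : Finset.Icc 1 (n - 1) = Finset.Ico 1 n := by
      rw [← Finset.Ico_add_one_right_eq_Icc]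
      congr 1
      omega
    rw [hIccIco, Finset.sum_Ico_eq_sum_range]
    have hnm : ((n:ℝ) - 1) / n = m := by rw [hm, hh]; field_simp
    have hstep : ∀ k ∈ Finset.range (n - 1),
        (∫ s in (((1 + k : ℕ):ℝ) - 1) / n..(((1 + k : ℕ):ℝ)) / n, ψ s)
          = ∫ s in ((k:ℕ):ℝ) / n..(((k:ℕ):ℝ) + 1) / n, ψ s := by
      intro k _
      push_cast
      ring_nf
    rw [Finset.sum_congr rfl hstep]
    have hadj := intervalIntegral.sum_integral_adjacent_intervals
      (a := fun k : ℕ => (k:ℝ) / n) (n := n - 1) (f := ψ) (μ := volume) ?_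
    · have h0 : ((0:ℕ):ℝ) / n = 0 := by norm_num
      have h1 : (((n-1:ℕ)):ℝ) / n = m := by
        rw [Nat.cast_sub hn]; push_cast; exact hnm
      rw [h0, h1] at hadj
      rw [← hadj]
      refine Finset.sum_congr rfl fun x _ => ?_
      push_cast
      ring_nf
    · intro k hk
      have hk' : k + 1 ≤ n - 1 := by omega
      have hk1 : ((k:ℝ) + 1) ≤ (n:ℝ) - 1 := by
        have : ((k + 1 : ℕ):ℝ) ≤ ((n - 1 : ℕ):ℝ) := by exact_mod_cast hk'
        rw [Nat.cast_sub hn] at this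
        push_cast at this
        linarith
      show IntervalIntegrable ψ volume ((k:ℝ) / n) (((k+1:ℕ):ℝ) / n)
      have hcast : ((k+1:ℕ):ℝ) = (k:ℝ) + 1 := by push_cast; ring
      rw [hcast]
      apply hψint_sub
      · positivity
      · rw [← hnm]; gcongr
      · gcongr <;> linarith
  have hsum_le : ∑ i ∈ Finset.Icc 1 (n - 1), ‖localAvg K n i - localAvg K n (i - 1)‖ ^ 2
      ≤ (n:ℝ) * ∫ s in (0:ℝ)..m, ψ s := by
    calc ∑ i ∈ Finset.Icc 1 (n - 1), ‖localAvg K n i - localAvg K n (i - 1)‖ ^ 2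
        ≤ ∑ i ∈ Finset.Icc 1 (n - 1), (n : ℝ) * ∫ s in (((i:ℝ) - 1) / n)..((i:ℝ) / n), ψ s :=
          Finset.sum_le_sum hterm
      _ = (n:ℝ) * ∑ i ∈ Finset.Icc 1 (n - 1), ∫ s in (((i:ℝ) - 1) / n)..((i:ℝ) / n), ψ s := by
          rw [Finset.mul_sum]
      _ = (n:ℝ) * ∫ s in (0:ℝ)..m, ψ s := by rw [hsum_eq]
  -- integral comparison
  have hΦsh_cont : ContinuousOn (fun s : ℝ => Φ (s + h)) (Icc 0 m) := by
    apply hΦcont.comp (Continuous.continuousOn (continuous_add_right h))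
    intro s hs
    simp only [mem_Icc] at hs ⊢
    constructor <;> linarith [hh0.le]
  have hΦm_cont : ContinuousOn Φ (Icc 0 m) := hΦcont.mono (Icc_subset_Icc le_rfl (by linarith))
  have hΦsh_int : IntervalIntegrable (fun s : ℝ => Φ (s + h)) volume 0 m :=
    hΦsh_cont.intervalIntegrable_of_Icc hm0
  have hΦm_int : IntervalIntegrable Φ volume 0 m :=
    hΦm_cont.intervalIntegrable_of_Icc hm0
  have hψint0m : IntervalIntegrable ψ volume 0 m :=
    hψcont.intervalIntegrable_of_Icc hm0
  have hRHS_int : IntervalIntegrable (fun s => h * (Φ (s + h) - Φ s)) volume 0 m :=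
    ((hΦsh_int.sub hΦm_int).const_mul h)
  have hX : (∫ s in (0:ℝ)..m, ψ s) ≤ ∫ s in (0:ℝ)..m, h * (Φ (s + h) - Φ s) :=
    intervalIntegral.integral_mono_on hm0 hψint0m hRHS_int hpt
  have hY : (∫ s in (0:ℝ)..m, h * (Φ (s + h) - Φ s))
      = h * ((∫ s in h..(1:ℝ), Φ s) - ∫ s in (0:ℝ)..m, Φ s) := by
    rw [intervalIntegral.integral_const_mul, intervalIntegral.integral_sub hΦsh_int hΦm_int,
      intervalIntegral.integral_comp_add_right Φ h, zero_add, hmh]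
  have hΦint : ∀ p q : ℝ, 0 ≤ p → q ≤ 1 → p ≤ q → IntervalIntegrable Φ volume p q := by
    intro p q hp hq hpq
    exact (hΦcont.mono (Icc_subset_Icc hp hq)).intervalIntegrable_of_Icc hpq
  have hA : (∫ s in (0:ℝ)..h, Φ s) + (∫ s in h..(1:ℝ), Φ s) = ∫ s in (0:ℝ)..(1:ℝ), Φ s :=
    intervalIntegral.integral_add_adjacent_intervals
      (hΦint 0 h le_rfl hh1 hh0.le) (hΦint h 1 hh0.le le_rfl hh1)
  have hB : (∫ s in (0:ℝ)..m, Φ s) + (∫ s in m..(1:ℝ), Φ s) = ∫ s in (0:ℝ)..(1:ℝ), Φ s :=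
    intervalIntegral.integral_add_adjacent_intervals
      (hΦint 0 m le_rfl (by linarith) hm0) (hΦint m 1 hm0 le_rfl (by linarith))
  have hΦle1 : ∀ s ∈ Icc m (1:ℝ), Φ s ≤ Φ 1 := by
    intro s hs
    have hs0 : 0 ≤ s := le_trans hm0 hs.1
    have hdiff : Φ 1 - Φ s = ∫ u in s..(1:ℝ), ‖K' u‖ ^ 2 :=
      integral_interval_sub_left (hL2sub 0 1 le_rfl le_rfl zero_le_one) (hL2sub 0 s le_rfl hs.2 hs0)
    have : 0 ≤ ∫ u in s..(1:ℝ), ‖K' u‖ ^ 2 :=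
      intervalIntegral.integral_nonneg hs.2 (fun u _ => sq_nonneg _)
    linarith
  have hC : (∫ s in m..(1:ℝ), Φ s) ≤ h * Φ 1 := by
    calc (∫ s in m..(1:ℝ), Φ s) ≤ ∫ _ in m..(1:ℝ), Φ 1 :=
          intervalIntegral.integral_mono_on (by linarith) (hΦint m 1 hm0 le_rfl (by linarith))
            intervalIntegrable_const hΦle1
      _ = (1 - m) • Φ 1 := intervalIntegral.integral_const _
      _ = h * Φ 1 := by rw [smul_eq_mul]; congr 1; linarith
  have hDnn : 0 ≤ ∫ s in (0:ℝ)..h, Φ s := by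
    apply intervalIntegral.integral_nonneg hh0.le
    intro s hs
    exact intervalIntegral.integral_nonneg hs.1 (fun u _ => sq_nonneg _)
  -- combine
  have hYY : (∫ s in h..(1:ℝ), Φ s) - (∫ s in (0:ℝ)..m, Φ s)
      = (∫ s in m..(1:ℝ), Φ s) - ∫ s in (0:ℝ)..h, Φ s := by linarith
  have hfinal : (n:ℝ) * ∑ i ∈ Finset.Icc 1 (n - 1),
      ‖localAvg K n i - localAvg K n (i - 1)‖ ^ 2 ≤ Φ 1 := by
    have hn2h : (n:ℝ) ^ 2 * h = n := by rw [hh, sq]; field_simp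
    calc (n:ℝ) * ∑ i ∈ Finset.Icc 1 (n - 1), ‖localAvg K n i - localAvg K n (i - 1)‖ ^ 2
        ≤ (n:ℝ) * ((n:ℝ) * ∫ s in (0:ℝ)..m, ψ s) :=
          mul_le_mul_of_nonneg_left hsum_le hn0.le
      _ = (n:ℝ) ^ 2 * ∫ s in (0:ℝ)..m, ψ s := by ring
      _ ≤ (n:ℝ) ^ 2 * ∫ s in (0:ℝ)..m, h * (Φ (s + h) - Φ s) :=
          mul_le_mul_of_nonneg_left hX (by positivity)
      _ = (n:ℝ) ^ 2 * (h * ((∫ s in h..(1:ℝ), Φ s) - ∫ s in (0:ℝ)..m, Φ s)) := by rw [hY]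
      _ = ((n:ℝ) ^ 2 * h) * ((∫ s in m..(1:ℝ), Φ s) - ∫ s in (0:ℝ)..h, Φ s) := by
          rw [hYY]; ring
      _ = (n:ℝ) * ((∫ s in m..(1:ℝ), Φ s) - ∫ s in (0:ℝ)..h, Φ s) := by rw [hn2h]
      _ ≤ (n:ℝ) * (h * Φ 1 - 0) := by
          apply mul_le_mul_of_nonneg_left _ hn0.le
          linarith
      _ = ((n:ℝ) * h) * Φ 1 := by ring
      _ = Φ 1 := by rw [hnh, one_mul]
  exact hfinal
theorem regulariser_limsup_inequality
    (d : ℕ) (τ₁ : ℝ) (hτ₁ : 0 < τ₁)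
    (K K' : ℝ → EuclideanSpace ℝ (Fin d × Fin d))
    (hK'int : IntervalIntegrable K' MeasureTheory.volume 0 1)
    (hK'L2 : IntervalIntegrable (fun t => ‖K' t‖ ^ 2) MeasureTheory.volume 0 1)
    (hFTC : ∀ s ∈ Icc (0:ℝ) 1, ∀ t ∈ Icc (0:ℝ) 1, K t - K s = ∫ u in s..t, K' u) :
    (∀ ε > 0,
      Filter.limsup (fun n : ℕ =>
          (n : ℝ) * ∑ i ∈ Finset.Icc 1 (n - 1), ‖localAvg K n i - localAvg K n (i - 1)‖ ^ 2
            + τ₁ * ‖localAvg K n 0‖ ^ 2) atTop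
        ≤ (1 + ε) * ((∫ t in (0:ℝ)..1, ‖K' t‖ ^ 2) + τ₁ * ‖K 0‖ ^ 2)) ∧
    Filter.limsup (fun n : ℕ =>
        (n : ℝ) * ∑ i ∈ Finset.Icc 1 (n - 1), ‖localAvg K n i - localAvg K n (i - 1)‖ ^ 2
          + τ₁ * ‖localAvg K n 0‖ ^ 2) atTop
      ≤ (∫ t in (0:ℝ)..1, ‖K' t‖ ^ 2) + τ₁ * ‖K 0‖ ^ 2 := by
    -- continuity of K on [0,1]
  have hKcont : ContinuousOn K (Icc 0 1) := by
    have hprim : ContinuousOn (fun t => ∫ u in (0:ℝ)..t, K' u) (Icc 0 1) := by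
      have := intervalIntegral.continuousOn_primitive_interval' hK'int
        (left_mem_uIcc (a := (0:ℝ)) (b := 1))
      rwa [uIcc_of_le zero_le_one] at this
    have hc : ContinuousOn (fun t => K 0 + ∫ u in (0:ℝ)..t, K' u) (Icc 0 1) :=
      continuousOn_const.add hprim
    apply hc.congr
    intro t ht
    have h := hFTC 0 ⟨le_rfl, zero_le_one⟩ t ht
    have := sub_eq_iff_eq_add'.mp h
    simpa using this
  -- the modulus Ψ
  set Ψ : ℝ → ℝ := fun x => ∫ u in (0:ℝ)..x, ‖K' u‖ with hΨdef
  have hΨcont : ContinuousOn Ψ (Icc 0 1) := by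
    have := intervalIntegral.continuousOn_primitive_interval' hK'int.norm
      (left_mem_uIcc (a := (0:ℝ)) (b := 1))
    rwa [uIcc_of_le zero_le_one] at this
  have hΨ0 : Ψ 0 = 0 := by simp [hΨdef]
  have hK'n_int : ∀ p q : ℝ, 0 ≤ p → q ≤ 1 → p ≤ q →
      IntervalIntegrable (fun t => ‖K' t‖) volume p q := by
    intro p q hp hq hpq
    apply hK'int.norm.mono_set
    rw [uIcc_of_le hpq, uIcc_of_le zero_le_one]
    exact Icc_subset_Icc hp hq
  -- bound on the boundary term
  have hbound : ∀ n : ℕ, 1 ≤ n → ‖localAvg K n 0 - K 0‖ ≤ Ψ ((n:ℝ)⁻¹) := by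
    intro n hn
    have hn0 : (0:ℝ) < n := by exact_mod_cast hn
    set h : ℝ := (n:ℝ)⁻¹ with hh
    have hh0 : 0 < h := inv_pos.mpr hn0
    have hh1 : h ≤ 1 := by
      rw [hh]; apply inv_le_one_of_one_le₀; exact_mod_cast hn
    have hnh : (n:ℝ) * h = 1 := mul_inv_cancel₀ hn0.ne'
    have hLA : localAvg K n 0 = (n:ℝ) • ∫ t in (0:ℝ)..h, K t := by
      show (n:ℝ) • ∫ t in (((0:ℕ):ℝ) / n)..((((0:ℕ):ℝ) + 1) / n), K t = _
      norm_num [one_div, hh]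
    have hKint : IntervalIntegrable K volume 0 h :=
      (hKcont.mono (Icc_subset_Icc le_rfl hh1)).intervalIntegrable_of_Icc hh0.le
    have hdiff : localAvg K n 0 - K 0 = (n:ℝ) • ∫ t in (0:ℝ)..h, (K t - K 0) := by
      rw [hLA, intervalIntegral.integral_sub hKint intervalIntegrable_const, smul_sub,
        intervalIntegral.integral_const, smul_smul]
      simp only [sub_zero]
      rw [hnh, one_smul]
    have hpt : ∀ t ∈ Icc (0:ℝ) h, ‖K t - K 0‖ ≤ Ψ h := by
      intro t ht
      have ht1 : t ∈ Icc (0:ℝ) 1 := ⟨ht.1, le_trans ht.2 hh1⟩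
      have heq : K t - K 0 = ∫ u in (0:ℝ)..t, K' u := hFTC 0 ⟨le_rfl, zero_le_one⟩ t ht1
      have h1 : ‖K t - K 0‖ ≤ ∫ u in (0:ℝ)..t, ‖K' u‖ := by
        rw [heq]
        exact intervalIntegral.norm_integral_le_integral_norm ht.1
      have h2 : Ψ h - Ψ t = ∫ u in t..h, ‖K' u‖ :=
        intervalIntegral.integral_interval_sub_left
          (hK'n_int 0 h le_rfl hh1 hh0.le) (hK'n_int 0 t le_rfl ht1.2 ht.1)
      have h3 : 0 ≤ ∫ u in t..h, ‖K' u‖ :=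
        intervalIntegral.integral_nonneg ht.2 (fun u _ => norm_nonneg _)
      have h4 : Ψ t ≤ Ψ h := by linarith
      exact le_trans h1 h4
    have hKsubcont : ContinuousOn (fun t => ‖K t - K 0‖) (Icc 0 h) :=
      (((hKcont.mono (Icc_subset_Icc le_rfl hh1)).sub continuousOn_const).norm)
    calc ‖localAvg K n 0 - K 0‖ = (n:ℝ) * ‖∫ t in (0:ℝ)..h, (K t - K 0)‖ := by
          rw [hdiff, norm_smul, Real.norm_eq_abs, abs_of_nonneg hn0.le]
      _ ≤ (n:ℝ) * ∫ t in (0:ℝ)..h, ‖K t - K 0‖ :=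
          mul_le_mul_of_nonneg_left
            (intervalIntegral.norm_integral_le_integral_norm hh0.le) hn0.le
      _ ≤ (n:ℝ) * ∫ _ in (0:ℝ)..h, Ψ h := by
          apply mul_le_mul_of_nonneg_left _ hn0.le
          exact intervalIntegral.integral_mono_on hh0.le
            (hKsubcont.intervalIntegrable_of_Icc hh0.le) intervalIntegrable_const hpt
      _ = (n:ℝ) * ((h - 0) • Ψ h) := by rw [intervalIntegral.integral_const]
      _ = ((n:ℝ) * h) * Ψ h := by rw [smul_eq_mul]; ring
      _ = Ψ h := by rw [hnh, one_mul]
  -- the boundary term converges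
  have hΨtend : Tendsto (fun n : ℕ => Ψ ((n:ℝ)⁻¹)) atTop (𝓝 0) := by
    have hcw : ContinuousWithinAt Ψ (Icc 0 1) 0 := hΨcont 0 ⟨le_rfl, zero_le_one⟩
    have h1 : Tendsto (fun n : ℕ => ((n:ℝ)⁻¹)) atTop (𝓝[Icc (0:ℝ) 1] 0) := by
      apply tendsto_nhdsWithin_of_tendsto_nhds_of_eventually_within
      · exact tendsto_inv_atTop_nhds_zero_nat
      · filter_upwards [eventually_ge_atTop 1] with n hn
        have hn0 : (0:ℝ) < n := by exact_mod_cast hn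
        exact ⟨(inv_pos.mpr hn0).le, inv_le_one_of_one_le₀ (by exact_mod_cast hn)⟩
    have := hcw.tendsto.comp h1
    rwa [hΨ0] at this
  have hK0tend : Tendsto (fun n : ℕ => localAvg K n 0) atTop (𝓝 (K 0)) := by
    rw [tendsto_iff_norm_sub_tendsto_zero]
    apply squeeze_zero' (Eventually.of_forall fun n => norm_nonneg _) _ hΨtend
    filter_upwards [eventually_ge_atTop 1] with n hn
    exact hbound n hn
  set L : ℝ := (∫ t in (0:ℝ)..1, ‖K' t‖ ^ 2) + τ₁ * ‖K 0‖ ^ 2 with hL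
  set F : ℕ → ℝ := fun n =>
      (n : ℝ) * ∑ i ∈ Finset.Icc 1 (n - 1), ‖localAvg K n i - localAvg K n (i - 1)‖ ^ 2
        + τ₁ * ‖localAvg K n 0‖ ^ 2 with hF
  set g : ℕ → ℝ := fun n =>
      (∫ t in (0:ℝ)..1, ‖K' t‖ ^ 2) + τ₁ * ‖localAvg K n 0‖ ^ 2 with hg
  have hgtend : Tendsto g atTop (𝓝 L) := by
    rw [hg, hL]
    exact tendsto_const_nhds.add (((hK0tend.norm).pow 2).const_mul τ₁)
  have hkey : ∀ᶠ n in atTop, F n ≤ g n := by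
    filter_upwards [eventually_ge_atTop 1] with n hn
    exact add_le_add_left
      (key_estimate K K' hK'int hK'L2 hFTC hKcont n hn) _
  have hFnn : ∀ n, 0 ≤ F n := by
    intro n
    rw [hF]
    positivity
  have hco : Filter.IsCoboundedUnder (· ≤ ·) atTop F :=
    Filter.isCoboundedUnder_le_of_eventually_le atTop (x := 0)
      (Eventually.of_forall hFnn)
  have hbd : Filter.IsBoundedUnder (· ≤ ·) atTop g := hgtend.isBoundedUnder_le
  have hmain : Filter.limsup F atTop ≤ L := by
    calc Filter.limsup F atTop ≤ Filter.limsup g atTop := limsup_le_limsup hkey hco hbd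
      _ = L := hgtend.limsup_eq
  have hLnn : 0 ≤ L := by
    rw [hL]
    have h1 : 0 ≤ ∫ t in (0:ℝ)..1, ‖K' t‖ ^ 2 :=
      intervalIntegral.integral_nonneg zero_le_one (fun u _ => sq_nonneg _)
    positivity
  constructor
  · intro ε hε
    calc Filter.limsup F atTop ≤ L := hmain
      _ ≤ (1 + ε) * L := by nlinarith
  · exact hmain
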